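/- Let $q_0, q_1$ be complex numbers with $|q_0| > 1$ and $|q_1| > 1$, and let $(i_k)_{k\ge1} \in \{0,1\}^\infty$. Define $\pi_{q_0,q_1}(i_1i_2\cdots) = \sum_{k=1}^\infty i_k/(q_{i_1}q_{i_2}\cdots q_{i_k})$. Then for any complex numbers $d_0, d_1$, we have $\sum_{k=1}^\infty d_{i_k}/(q_{i_1}q_{i_2}\cdots q_{i_k}) = \frac{d_0}{q_0-1} + \big(d_1 - d_0\frac{q_1-1}{q_0-1}\big)\, \pi_{q_0,q_1}(i_1i_2\cdots)$. -/

import Mathlib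

noncomputable def piC (q0 q1 : ℂ) (i : ℕ → Bool) : ℂ :=
  ∑' k : ℕ, (cond (i k) 1 0 : ℂ) / ∏ j ∈ Finset.range (k + 1), (cond (i j) q1 q0)

lemma summable_aux (q0 q1 : ℂ) (h0 : 1 < ‖q0‖) (h1 : 1 < ‖q1‖)
    (i : ℕ → Bool) (c0 c1 : ℂ) :
    Summable (fun k : ℕ => (cond (i k) c1 c0) / ∏ j ∈ Finset.range (k + 1), (cond (i j) q1 q0)) := by
  set m := min ‖q0‖ ‖q1‖ with hm
  have hm1 : 1 < m := lt_min h0 h1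
  have hm0 : 0 < m := lt_trans one_pos hm1
  set M := max ‖c0‖ ‖c1‖ with hM
  have hM0 : 0 ≤ M := le_trans (norm_nonneg _) (le_max_left _ _)
  apply Summable.of_norm
  have hgeo : Summable (fun k : ℕ => M * (m⁻¹) ^ (k + 1)) := by
    have h : Summable (fun k : ℕ => (m⁻¹) ^ k) :=
      summable_geometric_of_lt_one (by positivity) (inv_lt_one_of_one_lt₀ hm1)
    have := (h.mul_left (M * m⁻¹))
    apply this.congr
    intro k
    rw [pow_succ]
    ring
  apply Summable.of_nonneg_of_le (fun k => norm_nonneg _) ?_ hgeo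
  intro k
  have hprod : m ^ (k + 1) ≤ ‖∏ j ∈ Finset.range (k + 1), (cond (i j) q1 q0)‖ := by
    rw [norm_prod]
    calc m ^ (k + 1) = ∏ j ∈ Finset.range (k + 1), m := by
          rw [Finset.prod_const, Finset.card_range]
      _ ≤ ∏ j ∈ Finset.range (k + 1), ‖cond (i j) q1 q0‖ := by
          apply Finset.prod_le_prod (fun j _ => le_of_lt hm0)
          intro j _
          cases (i j) <;> simp [min_le_left, min_le_right, m]
  have hc : ‖(cond (i k) c1 c0 : ℂ)‖ ≤ M := by
    cases (i k) <;> simp [M, le_max_left, le_max_right]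
  rw [norm_div]
  calc ‖(cond (i k) c1 c0 : ℂ)‖ / ‖∏ j ∈ Finset.range (k + 1), (cond (i j) q1 q0)‖
      ≤ M / m ^ (k + 1) := div_le_div₀ hM0 hc (pow_pos hm0 _) hprod
    _ = M * (m⁻¹) ^ (k + 1) := by rw [inv_pow, div_eq_mul_inv]

theorem stmt0 (q0 q1 d0 d1 : ℂ) (h0 : 1 < ‖q0‖) (h1 : 1 < ‖q1‖)
    (i : ℕ → Bool) :
    (∑' k : ℕ, (cond (i k) d1 d0) / ∏ j ∈ Finset.range (k + 1), (cond (i j) q1 q0)) =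
      d0 / (q0 - 1) + (d1 - d0 * (q1 - 1) / (q0 - 1)) * piC q0 q1 i := by
  set P : ℕ → ℂ := fun k => ∏ j ∈ Finset.range (k + 1), (cond (i j) q1 q0) with hPdef
  have hcond : ∀ j, (cond (i j) q1 q0) ≠ 0 := by
    intro j
    have hq0 : q0 ≠ 0 := fun h => by rw [h, norm_zero] at h0; linarith
    have hq1 : q1 ≠ 0 := fun h => by rw [h, norm_zero] at h1; linarith
    cases (i j) <;> simpa
  have hsum : ∀ c0 c1 : ℂ, Summable (fun k : ℕ => (cond (i k) c1 c0) / P k) :=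
    fun c0 c1 => summable_aux q0 q1 h0 h1 i c0 c1
  set S : ℂ := ∑' k : ℕ, (1 : ℂ) / P k with hSdef
  set π : ℂ := ∑' k : ℕ, (cond (i k) 1 0 : ℂ) / P k with hπdef
  have hS_sum : Summable (fun k : ℕ => (1 : ℂ) / P k) := by simpa using hsum 1 1
  have hπ_sum : Summable (fun k : ℕ => (cond (i k) 1 0 : ℂ) / P k) := hsum 0 1
  -- telescoping identity
  have hkey : q0 * S + (q1 - q0) * π = 1 + S := by
    have h1' : ∀ k, (cond (i k) q1 q0) / P k
        = (1 : ℂ) / ∏ j ∈ Finset.range k, (cond (i j) q1 q0) := by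
      intro k
      show (cond (i k) q1 q0) / ∏ j ∈ Finset.range (k + 1), (cond (i j) q1 q0)
        = (1 : ℂ) / ∏ j ∈ Finset.range k, (cond (i j) q1 q0)
      rw [Finset.prod_range_succ, div_mul_cancel_right₀ (hcond k)]
      simp [one_div]
    have hg : Summable (fun k : ℕ => (1 : ℂ) / ∏ j ∈ Finset.range k, (cond (i j) q1 q0)) := by
      rw [← summable_nat_add_iff 1]
      exact hS_sum
    have h2 : (∑' k : ℕ, (cond (i k) q1 q0) / P k) = 1 + S := by
      calc (∑' k : ℕ, (cond (i k) q1 q0) / P k)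
          = ∑' k : ℕ, (1 : ℂ) / ∏ j ∈ Finset.range k, (cond (i j) q1 q0) :=
            tsum_congr h1'
        _ = 1 + S := by
            rw [Summable.tsum_eq_zero_add hg]
            simp [hSdef, hPdef]
    have h3 : ∀ k, (cond (i k) q1 q0) / P k
        = q0 * ((1:ℂ) / P k) + (q1 - q0) * ((cond (i k) 1 0 : ℂ) / P k) := by
      intro k
      have := hcond k
      cases (i k) <;> simp <;> field_simp <;> ring
    rw [← h2]
    rw [tsum_congr h3, Summable.tsum_add (hS_sum.mul_left q0) (hπ_sum.mul_left (q1 - q0)),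
      tsum_mul_left, tsum_mul_left]
  have hd : (∑' k : ℕ, (cond (i k) d1 d0) / P k) = d0 * S + (d1 - d0) * π := by
    have h3 : ∀ k, (cond (i k) d1 d0) / P k
        = d0 * ((1:ℂ) / P k) + (d1 - d0) * ((cond (i k) 1 0 : ℂ) / P k) := by
      intro k
      cases (i k) <;> simp [← add_div, mul_div_assoc] <;> ring
    rw [tsum_congr h3, Summable.tsum_add (hS_sum.mul_left d0) (hπ_sum.mul_left (d1 - d0)),
      tsum_mul_left, tsum_mul_left]
  have hq01 : q0 - 1 ≠ 0 := by
    intro h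
    have : q0 = 1 := by linear_combination h
    rw [this] at h0; simp at h0
  have hpi : piC q0 q1 i = π := rfl
  rw [hd, hpi]
  have hS : (q0 - 1) * S = 1 + (q0 - q1) * π := by linear_combination hkey
  field_simp
  linear_combination d0 * hS
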